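/- arXiv:2604.27579 — 2 statements merged into one kernel-verified Lean document; each statement's English description precedes it below -/
import Mathlib

section
/- Let η₁, η₂ > 0 and N > 0. Then the double integral ∫₀^∞ ∫₀^{η₁x/η₂} (1/N²) e^{-(x+y)/N} (1 - η₂y/(η₁x)) dy dx equals 1 - (η₂/η₁)·log(1 + η₁/η₂). -/
open MeasureTheory Real Set

private lemma exp_mul_int {t : ℝ} (ht : 0 < t) :
    ∫ x in Ioi (0:ℝ), Real.exp (-(t * x)) = 1 / t := by
  have h := integral_Ioi_of_hasDerivAt_of_tendsto' (a := 0) (m := 0)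
    (f := fun x => -(1/t) * Real.exp (-(t*x)))
    (f' := fun x => Real.exp (-(t*x))) ?_ ?_ ?_
  · rw [h]; simp
  · intro x _
    have h1 : HasDerivAt (fun x : ℝ => -(t*x)) (-t) x := by
      simpa [Pi.neg_def] using ((hasDerivAt_id x).const_mul t).neg
    have h2 := (h1.exp).const_mul (-(1/t))
    have h3 : -(1/t) * (Real.exp (-(t*x)) * -t) = Real.exp (-(t*x)) := by
      field_simp
    rw [h3] at h2
    exact h2
  · simpa [neg_mul] using exp_neg_integrableOn_Ioi 0 ht
  · have h2 : Filter.Tendsto (fun x : ℝ => t * x) Filter.atTop Filter.atTop :=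
      Filter.Tendsto.const_mul_atTop ht Filter.tendsto_id
    have := (tendsto_exp_neg_atTop_nhds_zero.comp h2).const_mul (-(1/t))
    simpa using this

private lemma frullani {p q : ℝ} (hq : 0 < q) (hpq : q ≤ p) :
    IntegrableOn (fun x => (Real.exp (-(q*x)) - Real.exp (-(p*x)))/x) (Ioi (0:ℝ)) ∧
    ∫ x in Ioi (0:ℝ), (Real.exp (-(q*x)) - Real.exp (-(p*x)))/x = Real.log (p/q) := by
  have hcont : Continuous (Function.uncurry fun (x t : ℝ) => Real.exp (-(t * x))) := by
    fun_prop
  have hbound : Integrable (fun z : ℝ × ℝ => Real.exp (-(q * z.1)) * 1)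
      ((volume.restrict (Ioi 0)).prod (volume.restrict (Ioc q p))) :=
    Integrable.mul_prod (f := fun x : ℝ => Real.exp (-(q * x))) (g := fun _ : ℝ => (1:ℝ)) (by simpa [neg_mul] using (exp_neg_integrableOn_Ioi 0 hq).integrable)
      (integrableOn_const measure_Ioc_lt_top.ne)
  have hint : Integrable (Function.uncurry fun (x t : ℝ) => Real.exp (-(t * x)))
      ((volume.restrict (Ioi 0)).prod (volume.restrict (Ioc q p))) := by
    refine hbound.mono' hcont.aestronglyMeasurable ?_
    rw [Measure.prod_restrict]
    filter_upwards [ae_restrict_mem (measurableSet_Ioi.prod measurableSet_Ioc)] with z hz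
    obtain ⟨hz1, hz2⟩ := hz
    have hz1' : (0:ℝ) < z.1 := hz1
    simp only [Function.uncurry, Real.norm_eq_abs, Real.abs_exp, mul_one]
    exact Real.exp_le_exp.2 (by nlinarith [hz2.1.le])
  have hpt : ∀ x ∈ Ioi (0:ℝ), (∫ t in Ioc q p, Real.exp (-(t*x)))
      = (Real.exp (-(q*x)) - Real.exp (-(p*x)))/x := by
    intro x hx
    have hx0 : (0:ℝ) < x := hx
    rw [← intervalIntegral.integral_of_le hpq]
    have hD : ∀ t ∈ uIcc q p, HasDerivAt (fun t => -(1/x) * Real.exp (-(t*x)))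
        (Real.exp (-(t*x))) t := by
      intro t _
      have h1 : HasDerivAt (fun t : ℝ => -(t*x)) (-x) t := by
        simpa [Pi.neg_def] using ((hasDerivAt_id t).mul_const x).neg
      have h2 := (h1.exp).const_mul (-(1/x))
      have h3 : -(1/x) * (Real.exp (-(t*x)) * -x) = Real.exp (-(t*x)) := by field_simp
      rw [h3] at h2; exact h2
    rw [intervalIntegral.integral_eq_sub_of_hasDerivAt hD
      ((by fun_prop : Continuous fun t : ℝ => Real.exp (-(t*x))).intervalIntegrable _ _)]
    field_simp
    ring
  constructor
  · refine (hint.integral_prod_left).congr ?_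
    filter_upwards [ae_restrict_mem measurableSet_Ioi] with x hx using hpt x hx
  · rw [setIntegral_congr_fun measurableSet_Ioi (fun x hx => (hpt x hx).symm),
      integral_integral_swap hint,
      setIntegral_congr_fun measurableSet_Ioc
        (fun t ht => exp_mul_int (hq.trans_le ht.1.le)),
      ← intervalIntegral.integral_of_le hpq, integral_one_div]
    intro h
    rcases mem_uIcc.1 h with ⟨h1, _⟩ | ⟨h2, _⟩
    · exact absurd h1 (not_le.2 hq)
    · exact absurd h2 (not_le.2 (hq.trans_le hpq))

private lemma inner_eval {N a x : ℝ} (hN : 0 < N) (ha : 0 < a) (hx : 0 < x) :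
    ∫ y in Ioc (0:ℝ) (a*x), (1/N^2) * Real.exp (-(x+y)/N) * (1 - y/(a*x))
      = Real.exp (-((1/N)*x)) / N
        - (1/a) * ((Real.exp (-((1/N)*x)) - Real.exp (-(((1+a)/N)*x)))/x) := by
  have hax : 0 < a*x := mul_pos ha hx
  have hN' : N ≠ 0 := hN.ne'
  have hax' : a*x ≠ 0 := hax.ne'
  rw [← intervalIntegral.integral_of_le hax.le]
  have hD : ∀ y ∈ uIcc (0:ℝ) (a*x),
      HasDerivAt (fun y => Real.exp (-(x+y)/N) * ((1/(a*x) - 1/N) + y/(N*(a*x))))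
        ((1/N^2) * Real.exp (-(x+y)/N) * (1 - y/(a*x))) y := by
    intro y _
    have h1 : HasDerivAt (fun y : ℝ => -(x+y)/N) (-(1/N)) y := by
      have := (((hasDerivAt_id y).const_add x).neg).div_const N
      simpa [neg_div] using this
    have h2 : HasDerivAt (fun y : ℝ => (1/(a*x) - 1/N) + y/(N*(a*x)))
        (1/(N*(a*x))) y := by
      have := ((hasDerivAt_id y).div_const (N*(a*x))).const_add (1/(a*x) - 1/N)
      simpa using this
    have h3 := (h1.exp).mul h2
    have heq : Real.exp (-(x+y)/N) * -(1/N) * ((1/(a*x) - 1/N) + y/(N*(a*x)))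
        + Real.exp (-(x+y)/N) * (1/(N*(a*x)))
        = (1/N^2) * Real.exp (-(x+y)/N) * (1 - y/(a*x)) := by
      field_simp
      ring
    rw [heq] at h3
    exact h3
  rw [intervalIntegral.integral_eq_sub_of_hasDerivAt hD
    ((by fun_prop : Continuous fun y : ℝ =>
      (1/N^2) * Real.exp (-(x+y)/N) * (1 - y/(a*x))).intervalIntegrable _ _)]
  have e1 : -(x + a*x)/N = -(((1+a)/N)*x) := by ring
  have e2 : -(x + 0)/N = -((1/N)*x) := by ring
  rw [e1, e2]
  field_simp
  ring

/-- The double integral computing the average minimum detection error probability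
in covert mode equals `1 - (η₂/η₁)·log(1 + η₁/η₂)`. -/
theorem stmt_0 (η₁ η₂ N : ℝ) (hη₁ : 0 < η₁) (hη₂ : 0 < η₂) (hN : 0 < N) :
    (∫ x in Ioi (0:ℝ), ∫ y in Ioc (0:ℝ) (η₁ * x / η₂),
        (1 / N ^ 2) * Real.exp (-(x + y) / N) * (1 - η₂ * y / (η₁ * x)))
      = 1 - (η₂ / η₁) * Real.log (1 + η₁ / η₂) := by
  set a : ℝ := η₁ / η₂ with ha_def
  have ha : 0 < a := div_pos hη₁ hη₂
  have hN' : N ≠ 0 := hN.ne'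
  have hq : (0:ℝ) < 1/N := by positivity
  have hpq : 1/N ≤ (1+a)/N := by gcongr; linarith
  have key : ∀ x ∈ Ioi (0:ℝ),
      (∫ y in Ioc (0:ℝ) (η₁ * x / η₂),
        (1 / N ^ 2) * Real.exp (-(x + y) / N) * (1 - η₂ * y / (η₁ * x)))
      = Real.exp (-((1/N)*x)) / N
        - (1/a) * ((Real.exp (-((1/N)*x)) - Real.exp (-(((1+a)/N)*x)))/x) := by
    intro x hx
    have hx0 : (0:ℝ) < x := hx
    have h1 : η₁ * x / η₂ = a * x := by rw [ha_def]; ring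
    have h2 : ∀ y : ℝ, (1 / N ^ 2) * Real.exp (-(x + y) / N) * (1 - η₂ * y / (η₁ * x))
        = (1 / N ^ 2) * Real.exp (-(x + y) / N) * (1 - y / (a * x)) := by
      intro y
      have h3 : η₂ * y / (η₁ * x) = y / (a * x) := by
        rw [ha_def]
        field_simp
      rw [h3]
    rw [h1]
    simp only [h2]
    exact inner_eval hN ha hx0
  rw [setIntegral_congr_fun measurableSet_Ioi key]
  have hI1 : IntegrableOn (fun x => Real.exp (-((1/N)*x)) / N) (Ioi (0:ℝ)) := by
    have : IntegrableOn (fun x => Real.exp (-((1/N)*x))) (Ioi (0:ℝ)) := by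
      simpa [neg_mul] using exp_neg_integrableOn_Ioi 0 hq
    exact this.div_const N
  obtain ⟨hI2, hval2⟩ := frullani (p := (1+a)/N) hq hpq
  rw [integral_sub hI1 (hI2.const_mul (1/a)), integral_div, exp_mul_int hq,
    MeasureTheory.integral_const_mul, hval2]
  have e3 : ((1+a)/N)/(1/N) = 1 + a := by field_simp
  have e4 : (1:ℝ)/(1/N)/N = 1 := by field_simp
  rw [e3, e4, ha_def, one_div_div]
end

section
/- Let X and Y be positive random variables with E[|log₂ X|] < ∞ and E[|log₂ Y|] < ∞, and let a, b > 0. Then lim_{ρ→∞} E[log₂((1 + aρX)/(1 + bρY))] = log₂(a/b) + E[log₂ X] - E[log₂ Y]. In particular, this limit is finite, so the high-SNR slope lim_{ρ→∞} E[log₂((1+aρX)/(1+bρY))]/log₂(ρ) equals 0. -/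
open MeasureTheory Filter

private lemma logb_one_add_inv_nonneg {t : ℝ} (ht : 0 < t) :
    0 ≤ Real.logb 2 (1 + 1 / t) :=
  Real.logb_nonneg one_lt_two (by nlinarith [one_div_pos.mpr ht])

private lemma logb_one_add_inv_le {c t : ℝ} (hc : 0 < c) (hct : c ≤ t) :
    Real.logb 2 (1 + 1 / t) ≤ 1 + |Real.logb 2 c| := by
  have ht : 0 < t := hc.trans_le hct
  have hpos : (0:ℝ) < 1 + 1 / t := by positivity
  rcases le_total 1 c with h | h
  · have h1 : 1 + 1 / t ≤ 2 := by
      have h2 : 1 / t ≤ 1 := by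
        rw [div_le_one ht]; linarith
      linarith
    calc Real.logb 2 (1 + 1 / t) ≤ Real.logb 2 2 :=
          Real.logb_le_logb_of_le one_lt_two hpos h1
      _ = 1 := Real.logb_self_eq_one (by norm_num)
      _ ≤ 1 + |Real.logb 2 c| := by have := abs_nonneg (Real.logb 2 c); linarith
  · have h1 : 1 + 1 / t ≤ 2 / c := by
      have h2 : 1 / t ≤ 1 / c := by gcongr
      have h3 : (1:ℝ) ≤ 1 / c := by rw [le_div_iff₀ hc]; linarith
      have : (2:ℝ) / c = 1 / c + 1 / c := by ring
      linarith
    calc Real.logb 2 (1 + 1 / t) ≤ Real.logb 2 (2 / c) :=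
          Real.logb_le_logb_of_le one_lt_two hpos h1
      _ = 1 - Real.logb 2 c := by
          rw [Real.logb_div (by norm_num) hc.ne', Real.logb_self_eq_one (by norm_num)]
      _ ≤ 1 + |Real.logb 2 c| := by
          have := neg_abs_le (Real.logb 2 c); linarith

/-- High-SNR saturation of the secrecy ergodic rate, and zero high-SNR slope. -/
theorem stmt_9 {Ω : Type*} [MeasurableSpace Ω] (μ : Measure Ω) [IsProbabilityMeasure μ]
    (X Y : Ω → ℝ) (hXmeas : Measurable X) (hYmeas : Measurable Y)
    (hX0 : ∀ᵐ ω ∂μ, 0 < X ω) (hY0 : ∀ᵐ ω ∂μ, 0 < Y ω)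
    (hlogX : Integrable (fun ω => Real.logb 2 (X ω)) μ)
    (hlogY : Integrable (fun ω => Real.logb 2 (Y ω)) μ)
    (a b : ℝ) (ha : 0 < a) (hb : 0 < b) :
    Tendsto (fun ρ : ℝ => ∫ ω, Real.logb 2 ((1 + a * ρ * X ω) / (1 + b * ρ * Y ω)) ∂μ)
      atTop
      (nhds (Real.logb 2 (a / b) + (∫ ω, Real.logb 2 (X ω) ∂μ)
        - ∫ ω, Real.logb 2 (Y ω) ∂μ)) ∧
    Tendsto (fun ρ : ℝ =>
        (∫ ω, Real.logb 2 ((1 + a * ρ * X ω) / (1 + b * ρ * Y ω)) ∂μ) / Real.logb 2 ρ)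
      atTop (nhds 0) := by
  -- auxiliary measurability
  have hmeasL : ∀ (c : ℝ) (Z : Ω → ℝ), Measurable Z →
      Measurable (fun ω => Real.logb 2 (1 + 1 / (c * Z ω))) := by
    intro c Z hZ
    have : Measurable fun ω => 1 + 1 / (c * Z ω) :=
      measurable_const.add (measurable_const.div (hZ.const_mul c))
    exact (Real.measurable_log.div_const _).comp this
  -- generic components: for a positive constant k and positive variable Z with integrable logb,
  -- the error integral ∫ logb 2 (1 + 1/(k ρ Z)) tends to 0 and is integrable for each ρ > 0.
  have main : ∀ (k : ℝ) (hk : 0 < k) (Z : Ω → ℝ) (hZmeas : Measurable Z)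
      (hZ0 : ∀ᵐ ω ∂μ, 0 < Z ω) (hlogZ : Integrable (fun ω => Real.logb 2 (Z ω)) μ),
      (∀ ρ : ℝ, 0 < ρ → Integrable (fun ω => Real.logb 2 (1 + 1 / (k * ρ * Z ω))) μ) ∧
      Tendsto (fun ρ : ℝ => ∫ ω, Real.logb 2 (1 + 1 / (k * ρ * Z ω)) ∂μ) atTop (nhds 0) := by
    intro k hk Z hZmeas hZ0 hlogZ
    constructor
    · intro ρ hρ
      refine Integrable.mono' ((integrable_const (1 + |Real.logb 2 (k * ρ)|)).add hlogZ.abs)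
        ((hmeasL (k * ρ) Z hZmeas).aestronglyMeasurable.congr ?_) ?_
      · filter_upwards with ω
        ring_nf
      · filter_upwards [hZ0] with ω hω
        have hkρZ : 0 < k * ρ * Z ω := by positivity
        rw [Real.norm_eq_abs, abs_of_nonneg (logb_one_add_inv_nonneg hkρZ)]
        calc Real.logb 2 (1 + 1 / (k * ρ * Z ω)) ≤ 1 + |Real.logb 2 (k * ρ * Z ω)| :=
              logb_one_add_inv_le hkρZ le_rfl
          _ ≤ 1 + (|Real.logb 2 (k * ρ)| + |Real.logb 2 (Z ω)|) := by
              rw [Real.logb_mul (by positivity) hω.ne']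
              have := abs_add_le (Real.logb 2 (k * ρ)) (Real.logb 2 (Z ω))
              linarith
          _ = 1 + |Real.logb 2 (k * ρ)| + |Real.logb 2 (Z ω)| := by ring
    · have h0 : (0:ℝ) = ∫ _ : Ω, (0:ℝ) ∂μ := by simp
      rw [h0]
      refine tendsto_integral_filter_of_dominated_convergence
        (fun ω => 1 + |Real.logb 2 k| + |Real.logb 2 (Z ω)|)
        (Eventually.of_forall fun ρ => (hmeasL (k * ρ) Z hZmeas).aestronglyMeasurable.congr
          (by filter_upwards with ω; ring_nf))
        ?_ ((integrable_const (1 + |Real.logb 2 k|)).add hlogZ.abs) ?_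
      · filter_upwards [eventually_ge_atTop (1:ℝ)] with ρ hρ
        filter_upwards [hZ0] with ω hω
        have hρ0 : (0:ℝ) < ρ := lt_of_lt_of_le one_pos hρ
        have hkρZ : 0 < k * ρ * Z ω := by positivity
        have hkZ : 0 < k * Z ω := by positivity
        have hle : k * Z ω ≤ k * ρ * Z ω := by nlinarith
        rw [Real.norm_eq_abs, abs_of_nonneg (logb_one_add_inv_nonneg hkρZ)]
        calc Real.logb 2 (1 + 1 / (k * ρ * Z ω)) ≤ 1 + |Real.logb 2 (k * Z ω)| :=
              logb_one_add_inv_le hkZ hle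
          _ ≤ 1 + (|Real.logb 2 k| + |Real.logb 2 (Z ω)|) := by
              rw [Real.logb_mul hk.ne' hω.ne']
              have := abs_add_le (Real.logb 2 k) (Real.logb 2 (Z ω))
              linarith
          _ = 1 + |Real.logb 2 k| + |Real.logb 2 (Z ω)| := by ring
      · filter_upwards [hZ0] with ω hω
        have h1 : Tendsto (fun ρ : ℝ => k * ρ * Z ω) atTop atTop := by
          have := tendsto_id.const_mul_atTop (show 0 < k * Z ω by positivity)
          refine this.congr fun ρ => ?_
          simp [id]
          ring
        have h2 : Tendsto (fun ρ : ℝ => 1 + 1 / (k * ρ * Z ω)) atTop (nhds 1) := by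
          have := h1.inv_tendsto_atTop
          have h3 := tendsto_const_nhds.add (f := fun ρ : ℝ => (1:ℝ)) this
          simpa [one_div] using h3
        have h4 : ContinuousAt (Real.logb 2) 1 := Real.continuousAt_logb one_ne_zero
        have := h4.tendsto.comp h2
        simpa [Function.comp_def] using this
  obtain ⟨hIntA, hTendA⟩ := main a ha X hXmeas hX0 hlogX
  obtain ⟨hIntB, hTendB⟩ := main b hb Y hYmeas hY0 hlogY
  set C : ℝ := Real.logb 2 (a / b) + (∫ ω, Real.logb 2 (X ω) ∂μ)
      - ∫ ω, Real.logb 2 (Y ω) ∂μ with hC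
  -- eventual equality of the main integral
  have heq : ∀ᶠ ρ : ℝ in atTop,
      (∫ ω, Real.logb 2 ((1 + a * ρ * X ω) / (1 + b * ρ * Y ω)) ∂μ)
        = C + ((∫ ω, Real.logb 2 (1 + 1 / (a * ρ * X ω)) ∂μ)
            - ∫ ω, Real.logb 2 (1 + 1 / (b * ρ * Y ω)) ∂μ) := by
    filter_upwards [eventually_gt_atTop (0:ℝ)] with ρ hρ
    have hptwise : ∀ᵐ ω ∂μ,
        Real.logb 2 ((1 + a * ρ * X ω) / (1 + b * ρ * Y ω))
          = (Real.logb 2 (a / b) + Real.logb 2 (X ω) - Real.logb 2 (Y ω))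
            + (Real.logb 2 (1 + 1 / (a * ρ * X ω)) - Real.logb 2 (1 + 1 / (b * ρ * Y ω))) := by
      filter_upwards [hX0, hY0] with ω hx hy
      have hA : 0 < a * ρ * X ω := by positivity
      have hB : 0 < b * ρ * Y ω := by positivity
      have hA1 : (0:ℝ) < 1 + a * ρ * X ω := by linarith
      have hB1 : (0:ℝ) < 1 + b * ρ * Y ω := by linarith
      have e1 : 1 + a * ρ * X ω = (a * ρ * X ω) * (1 + 1 / (a * ρ * X ω)) := by
        field_simp
        ring
      have e2 : 1 + b * ρ * Y ω = (b * ρ * Y ω) * (1 + 1 / (b * ρ * Y ω)):= by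
        field_simp
        ring
      have hA2 : (0:ℝ) < 1 + 1 / (a * ρ * X ω) := by positivity
      have hB2 : (0:ℝ) < 1 + 1 / (b * ρ * Y ω) := by positivity
      rw [Real.logb_div hA1.ne' hB1.ne', e1, e2,
        Real.logb_mul hA.ne' hA2.ne', Real.logb_mul hB.ne' hB2.ne',
        Real.logb_mul (by positivity : (a*ρ:ℝ) ≠ 0) hx.ne',
        Real.logb_mul (by positivity : (b*ρ:ℝ) ≠ 0) hy.ne',
        Real.logb_mul ha.ne' hρ.ne', Real.logb_mul hb.ne' hρ.ne',
        Real.logb_div ha.ne' hb.ne']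
      ring
    have hint1 : Integrable (fun ω => Real.logb 2 (a / b) + Real.logb 2 (X ω)
        - Real.logb 2 (Y ω)) μ := ((integrable_const _).add hlogX).sub hlogY
    have hint2 : Integrable (fun ω => Real.logb 2 (1 + 1 / (a * ρ * X ω))
        - Real.logb 2 (1 + 1 / (b * ρ * Y ω))) μ := (hIntA ρ hρ).sub (hIntB ρ hρ)
    have hi : Integrable (fun ω => Real.logb 2 (a / b) + Real.logb 2 (X ω)) μ :=
      (integrable_const _).add hlogX
    rw [integral_congr_ae hptwise, integral_add hint1 hint2,
      integral_sub hi hlogY,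
      integral_add (integrable_const _) hlogX,
      integral_sub (hIntA ρ hρ) (hIntB ρ hρ)]
    simp [hC]
  have hfirst : Tendsto (fun ρ : ℝ => ∫ ω, Real.logb 2 ((1 + a * ρ * X ω)
      / (1 + b * ρ * Y ω)) ∂μ) atTop (nhds C) := by
    have : Tendsto (fun ρ : ℝ => C + ((∫ ω, Real.logb 2 (1 + 1 / (a * ρ * X ω)) ∂μ)
        - ∫ ω, Real.logb 2 (1 + 1 / (b * ρ * Y ω)) ∂μ)) atTop (nhds (C + (0 - 0))) :=
      tendsto_const_nhds.add (hTendA.sub hTendB)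
    have h5 : C + ((0:ℝ) - 0) = C := by ring
    rw [h5] at this
    exact this.congr' (by filter_upwards [heq] with ρ h using h.symm)
  refine ⟨hfirst, ?_⟩
  exact hfirst.div_atTop (Real.tendsto_logb_atTop one_lt_two)
end
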